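/- Let (P_n)_{n≥1} be a sequence of strictly increasing continuous functions P_n : [0,1] → [0,1] with P_n(0)=0, P_n(1)=1, and suppose: (a) for every 0 < ε ≤ 1/2 there is C < ∞ with P_n^{-1}(1−ε) − P_n^{-1}(ε) ≤ C/n for all n ≥ 1; (b) P_{n+1}(P_n^{-1}(1/4)) ≤ 1/4 for all n ≥ 1 (so q_n := P_n^{-1}(1/4) is nondecreasing). Then p_c := lim_n q_n exists in [0,1] and P_n(p) → 0 for all p < p_c while P_n(p) → 1 for all p > p_c. -/
import Mathlib


open Filter

/-- abstract sharp-threshold argument. If `P n : [0,1] → [0,1]` are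
strictly increasing continuous onto maps with inverses `Q n`, the critical window
has width `O(1/n)` (hypothesis `hwin`), and the level-1/4 quantiles `Q n (1/4)` are
nondecreasing (hypothesis `hq`), then `p_c := lim_n Q n (1/4)` exists and
`P n p → 0` for `p < p_c` while `P n p → 1` for `p > p_c`. -/
theorem stmt_19 (P : ℕ → ℝ → ℝ) (Q : ℕ → ℝ → ℝ)
    (hmono : ∀ n, 1 ≤ n → StrictMonoOn (P n) (Set.Icc 0 1))
    (hcont : ∀ n, 1 ≤ n → ContinuousOn (P n) (Set.Icc 0 1))
    (hmaps : ∀ n, 1 ≤ n → Set.MapsTo (P n) (Set.Icc 0 1) (Set.Icc 0 1))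
    (h0 : ∀ n, 1 ≤ n → P n 0 = 0) (h1 : ∀ n, 1 ≤ n → P n 1 = 1)
    (hQ : ∀ n, 1 ≤ n → ∀ q ∈ Set.Icc (0 : ℝ) 1,
      Q n q ∈ Set.Icc (0 : ℝ) 1 ∧ P n (Q n q) = q)
    (hwin : ∀ ε : ℝ, 0 < ε → ε ≤ 1 / 2 →
      ∃ C : ℝ, ∀ n, 1 ≤ n → Q n (1 - ε) - Q n ε ≤ C / n)
    (hq : ∀ n, 1 ≤ n → P (n + 1) (Q n (1 / 4)) ≤ 1 / 4) :
    ∃ pc ∈ Set.Icc (0 : ℝ) 1,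
      Tendsto (fun n => Q n (1 / 4)) atTop (nhds pc) ∧
      (∀ p ∈ Set.Icc (0 : ℝ) 1, p < pc →
        Tendsto (fun n => P n p) atTop (nhds 0)) ∧
      (∀ p ∈ Set.Icc (0 : ℝ) 1, pc < p →
        Tendsto (fun n => P n p) atTop (nhds 1)) := by
  -- the shifted quantile sequence
  set q : ℕ → ℝ := fun n => Q (n + 1) (1 / 4) with hq_def
  have hquarter : (1 / 4 : ℝ) ∈ Set.Icc (0 : ℝ) 1 := by norm_num
  have hQ4 : ∀ n, 1 ≤ n → Q n (1 / 4) ∈ Set.Icc (0 : ℝ) 1 ∧ P n (Q n (1 / 4)) = 1 / 4 :=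
    fun n hn => hQ n hn _ hquarter
  -- monotonicity of Q n at levels
  have hQle : ∀ n, 1 ≤ n → ∀ a b : ℝ, a ∈ Set.Icc (0 : ℝ) 1 → b ∈ Set.Icc (0 : ℝ) 1 →
      a ≤ b → Q n a ≤ Q n b := by
    intro n hn a b ha hb hab
    have h1 := hQ n hn a ha
    have h2 := hQ n hn b hb
    exact ((hmono n hn).le_iff_le h1.1 h2.1).mp (by rw [h1.2, h2.2]; exact hab)
  -- monotonicity of the quantile sequence
  have hqmono : Monotone q := by
    apply monotone_nat_of_le_succ
    intro n
    have h1 := hQ4 (n + 1) (by omega)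
    have h2 := hQ4 (n + 2) (by omega)
    have h3 := hq (n + 1) (by omega)
    have := ((hmono (n + 2) (by omega)).le_iff_le h1.1 h2.1).mp
      (by rw [h2.2]; exact h3)
    simpa [hq_def] using this
  have hbdd : BddAbove (Set.range q) := by
    refine ⟨1, ?_⟩
    rintro x ⟨n, rfl⟩
    exact (hQ4 (n + 1) (by omega)).1.2
  set pc : ℝ := ⨆ n, q n with hpc_def
  have hpc0 : (0 : ℝ) ≤ pc := le_trans (hQ4 1 le_rfl).1.1 (le_ciSup hbdd 0)
  have hpc1 : pc ≤ 1 := ciSup_le fun n => (hQ4 (n + 1) (by omega)).1.2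
  -- q n ≤ pc for all n, and Q n (1/4) relates to q (n-1)
  have hqle_pc : ∀ n, q n ≤ pc := fun n => le_ciSup hbdd n
  have hQeq : ∀ n, 1 ≤ n → Q n (1 / 4) = q (n - 1) := by
    intro n hn
    simp only [hq_def]
    congr 1
    omega
  refine ⟨pc, ⟨hpc0, hpc1⟩, ?_, ?_, ?_⟩
  · -- convergence of the quantiles
    rw [← tendsto_add_atTop_iff_nat 1]
    exact tendsto_atTop_ciSup hqmono hbdd
  · -- subcritical regime
    intro p hp hppc
    rw [tendsto_order]
    constructor
    · intro a ha
      filter_upwards [eventually_ge_atTop 1] with n hn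
      exact lt_of_lt_of_le ha (hmaps n hn hp).1
    · intro a ha
      set ε : ℝ := min a (1 / 4) with hε_def
      have hεpos : 0 < ε := lt_min ha (by norm_num)
      have hε14 : ε ≤ 1 / 4 := min_le_right _ _
      have hεmem : ε ∈ Set.Icc (0 : ℝ) 1 := ⟨le_of_lt hεpos, by linarith⟩
      have h1εmem : (1 - ε) ∈ Set.Icc (0 : ℝ) 1 := ⟨by linarith, by linarith⟩
      obtain ⟨C, hC⟩ := hwin ε hεpos (by linarith)
      obtain ⟨N, hN⟩ := (lt_ciSup_iff hbdd).mp hppc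
      have hdC : ∀ᶠ n : ℕ in atTop, C / (n : ℝ) < q N - p :=
        (tendsto_const_div_atTop_nhds_zero_nat C).eventually_lt_const (by linarith)
      filter_upwards [eventually_ge_atTop (N + 1), hdC] with n hn hdn
      have hn1 : 1 ≤ n := le_trans (by omega) hn
      have hqN : q N ≤ Q n (1 / 4) := by
        rw [hQeq n hn1]
        exact hqmono (by omega)
      have h14le : Q n (1 / 4) ≤ Q n (1 - ε) := hQle n hn1 _ _ hquarter h1εmem (by linarith)
      have hwinn := hC n hn1
      have hplt : p < Q n ε := by linarith
      have hε_eq := hQ n hn1 ε hεmem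
      have := (hmono n hn1) hp hε_eq.1 hplt
      rw [hε_eq.2] at this
      exact lt_of_lt_of_le this (min_le_left _ _)
  · -- supercritical regime
    intro p hp hpcp
    rw [tendsto_order]
    constructor
    · intro a ha
      set ε : ℝ := min (1 - a) (1 / 4) with hε_def
      have hεpos : 0 < ε := lt_min (by linarith) (by norm_num)
      have hε14 : ε ≤ 1 / 4 := min_le_right _ _
      have hεmem : ε ∈ Set.Icc (0 : ℝ) 1 := ⟨le_of_lt hεpos, by linarith⟩
      have h1εmem : (1 - ε) ∈ Set.Icc (0 : ℝ) 1 := ⟨by linarith, by linarith⟩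
      obtain ⟨C, hC⟩ := hwin ε hεpos (by linarith)
      have hdC : ∀ᶠ n : ℕ in atTop, C / (n : ℝ) < p - pc :=
        (tendsto_const_div_atTop_nhds_zero_nat C).eventually_lt_const (by linarith)
      filter_upwards [eventually_ge_atTop 1, hdC] with n hn1 hdn
      have hqn_pc : Q n (1 / 4) ≤ pc := by rw [hQeq n hn1]; exact hqle_pc _
      have hεle : Q n ε ≤ Q n (1 / 4) := hQle n hn1 _ _ hεmem hquarter (by linarith)
      have hwinn := hC n hn1
      have hlt : Q n (1 - ε) < p := by linarith
      have h1ε_eq := hQ n hn1 (1 - ε) h1εmem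
      have := (hmono n hn1) h1ε_eq.1 hp hlt
      rw [h1ε_eq.2] at this
      have : 1 - ε < P n p := this
      have haε : a ≤ 1 - ε := by
        have := min_le_left (1 - a) (1 / 4)
        linarith
      linarith
    · intro a ha
      filter_upwards [eventually_ge_atTop 1] with n hn
      exact lt_of_le_of_lt (hmaps n hn hp).2 ha
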